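/- arXiv:2101.05999 — 2 statements merged into one kernel-verified Lean document; each statement's English description precedes it below -/
import Mathlib

section
/- Let f be a loop-count function on states of n crossings. Then for every state s, ōdeg w(s) ≤ ōdeg w(s_A) and u̲deg w(s) ≥ u̲deg w(s_B), where s_A and s_B are the constant-false and constant-true states. -/
open LaurentPolynomial

/-- Maximal degree (max of the support), with convention `odeg 0 = 0`. -/
noncomputable def odeg (g : LaurentPolynomial ℤ) : ℤ := WithBot.unbotD 0 g.coeff.support.max

/-- Minimal degree (min of the support), with convention `udeg 0 = 0`. -/
noncomputable def udeg (g : LaurentPolynomial ℤ) : ℤ := WithTop.untopD 0 g.coeff.support.min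

/-- The span of a Laurent polynomial. -/
noncomputable def lspan (g : LaurentPolynomial ℤ) : ℤ := odeg g - udeg g

/-- Number of crossings spliced by an A-splice in the state `s`. -/
def alpha {n : ℕ} (s : Fin n → Bool) : ℕ :=
  (Finset.univ.filter (fun i => s i = false)).card

/-- Number of crossings spliced by a B-splice in the state `s`. -/
def beta {n : ℕ} (s : Fin n → Bool) : ℕ :=
  (Finset.univ.filter (fun i => s i = true)).card

/-- A loop-count function: at least one loop in every state, and changing the
splice at one crossing changes the number of loops by at most one. -/
def IsLoopCount {n : ℕ} (f : (Fin n → Bool) → ℕ) : Prop :=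
  (∀ s, 1 ≤ f s) ∧
    ∀ (s : Fin n → Bool) (i : Fin n),
      |(f (Function.update s i (!(s i))) : ℤ) - (f s : ℤ)| ≤ 1

/-- The weight `A^(α(s)-β(s)) * (-A^2 - A^(-2))^(f(s)-1)` of a state `s`. -/
noncomputable def weight {n : ℕ} (f : (Fin n → Bool) → ℕ) (s : Fin n → Bool) :
    LaurentPolynomial ℤ :=
  T ((alpha s : ℤ) - (beta s : ℤ)) * (-T 2 - T (-2)) ^ (f s - 1)

/-- The Kauffman bracket of a loop-count function: the sum of the weights. -/
noncomputable def bracket {n : ℕ} (f : (Fin n → Bool) → ℕ) : LaurentPolynomial ℤ :=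
  ∑ s : Fin n → Bool, weight f s

/- ===== auxiliary material ===== -/

open Polynomial

noncomputable def qAux : ℤ[X] := -(1 + X ^ 4)

lemma qAux_natDegree : qAux.natDegree = 4 := by
  rw [qAux, natDegree_neg]; compute_degree!

lemma qAux_ne_zero : qAux ≠ 0 := by
  intro h
  have := congrArg (fun p => p.coeff 0) h
  rw [qAux] at this; simp at this

lemma qAux_pow_natDegree (k : ℕ) : (qAux ^ k).natDegree = 4 * k := by
  rw [natDegree_pow, qAux_natDegree]; ring

lemma qAux_pow_coeff_top (k : ℕ) : (qAux ^ k).coeff (4 * k) ≠ 0 := by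
  rw [← qAux_pow_natDegree]
  apply Polynomial.coeff_ne_zero_of_eq_degree
  rw [degree_eq_natDegree (pow_ne_zero _ qAux_ne_zero)]

lemma qAux_pow_coeff_bot (k : ℕ) : (qAux ^ k).coeff 0 ≠ 0 := by
  have : (qAux ^ k).coeff 0 = (qAux.coeff 0) ^ k := by
    simpa using (map_pow (constantCoeff (R := ℤ)) qAux k)
  rw [this, show qAux.coeff 0 = -1 from by rw [qAux]; simp]
  simp [pow_ne_zero]

lemma support_toLaurent_mul_T (p : ℤ[X]) (m : ℤ) :
    (toLaurent p * T m : LaurentPolynomial ℤ).coeff.support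
      = (p.support.map Nat.castEmbedding).map (addRightEmbedding m) := by
  rw [← LaurentPolynomial.support_coeff_toLaurent]
  exact AddMonoidAlgebra.support_coeff_mul_single _ 1 (by simp) m

lemma weight_eq {n : ℕ} (f : (Fin n → Bool) → ℕ) (s : Fin n → Bool) :
    weight f s = toLaurent (qAux ^ (f s - 1))
      * T (((alpha s : ℤ) - (beta s : ℤ)) - 2 * ((f s - 1 : ℕ) : ℤ)) := by
  have hδ : (-T 2 - T (-2) : LaurentPolynomial ℤ) = toLaurent qAux * T (-2) := by
    rw [qAux]
    simp only [map_neg, map_add, map_one, Polynomial.toLaurent_X_pow]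
    rw [neg_mul, add_mul, one_mul, ← T_add]
    norm_num; ring
  rw [weight, hδ, mul_pow, ← map_pow, T_pow,
    show ((alpha s : ℤ) - (beta s : ℤ)) - 2 * ((f s - 1 : ℕ) : ℤ)
      = ((f s - 1 : ℕ) : ℤ) * (-2) + (((alpha s : ℤ) - (beta s : ℤ))) from by push_cast; ring,
    T_add]
  ring

lemma mem_support_weight {n : ℕ} (f : (Fin n → Bool) → ℕ) (s : Fin n → Bool) (x : ℤ) :
    x ∈ (weight f s).coeff.support ↔
      ∃ a ∈ (qAux ^ (f s - 1)).support,
        (a : ℤ) + (((alpha s : ℤ) - (beta s : ℤ)) - 2 * ((f s - 1 : ℕ) : ℤ)) = x := by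
  rw [weight_eq, support_toLaurent_mul_T]
  simp [Finset.mem_map, Nat.castEmbedding, addRightEmbedding]

lemma le_odeg {g : LaurentPolynomial ℤ} {x : ℤ} (hx : x ∈ g.coeff.support) : x ≤ odeg g := by
  obtain ⟨v, hv⟩ := Finset.max_of_mem hx
  have h1 : (x : WithBot ℤ) ≤ (v : WithBot ℤ) := hv ▸ Finset.le_max hx
  rw [odeg, hv, WithBot.unbotD_coe]
  exact_mod_cast h1

lemma odeg_le {g : LaurentPolynomial ℤ} {b : ℤ} (h0 : g.coeff.support.Nonempty)
    (h : ∀ x ∈ g.coeff.support, x ≤ b) : odeg g ≤ b := by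
  obtain ⟨x, hx⟩ := h0
  obtain ⟨v, hv⟩ := Finset.max_of_mem hx
  rw [odeg, hv, WithBot.unbotD_coe]
  exact h v (Finset.mem_of_max hv)

lemma udeg_le {g : LaurentPolynomial ℤ} {x : ℤ} (hx : x ∈ g.coeff.support) : udeg g ≤ x := by
  obtain ⟨v, hv⟩ := Finset.min_of_mem hx
  have h1 : (v : WithTop ℤ) ≤ (x : WithTop ℤ) := hv ▸ Finset.min_le hx
  rw [udeg, hv, WithTop.untopD_coe]
  exact_mod_cast h1

lemma le_udeg {g : LaurentPolynomial ℤ} {b : ℤ} (h0 : g.coeff.support.Nonempty)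
    (h : ∀ x ∈ g.coeff.support, b ≤ x) : b ≤ udeg g := by
  obtain ⟨x, hx⟩ := h0
  obtain ⟨v, hv⟩ := Finset.min_of_mem hx
  rw [udeg, hv, WithTop.untopD_coe]
  exact h v (Finset.mem_of_min hv)

lemma lipschitz {n : ℕ} {f : (Fin n → Bool) → ℕ} (hf : IsLoopCount f) :
    ∀ (k : ℕ) (s t : Fin n → Bool),
      (Finset.univ.filter (fun i => s i ≠ t i)).card = k → (f s : ℤ) ≤ f t + k := by
  intro k
  induction k with
  | zero =>
    intro s t h
    have hst : s = t := by
      funext i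
      by_contra hi
      have : i ∈ Finset.univ.filter (fun i => s i ≠ t i) := by simp [hi]
      rw [Finset.card_eq_zero.mp h] at this
      simp at this
    simp [hst]
  | succ k ih =>
    intro s t h
    have hne : (Finset.univ.filter (fun i => s i ≠ t i)).Nonempty := by
      rw [← Finset.card_pos, h]; omega
    obtain ⟨i, hi⟩ := hne
    have hsi : s i ≠ t i := by simpa using hi
    set s' := Function.update s i (t i) with hs'
    have hs'' : s' = Function.update s i (!(s i)) := by
      rw [hs']
      congr 1
      cases hb : s i <;> cases ht : t i <;> simp_all
    have h1 : (f s : ℤ) ≤ f s' + 1 := by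
      have h2 := hf.2 s i
      rw [← hs''] at h2
      have h3 := abs_le.mp h2
      omega
    have hcard : (Finset.univ.filter (fun j => s' j ≠ t j)).card = k := by
      have hset : (Finset.univ.filter (fun j => s' j ≠ t j))
          = (Finset.univ.filter (fun j => s j ≠ t j)).erase i := by
        ext j
        by_cases hj : j = i <;> simp [hs', Function.update_apply, hj]
      rw [hset, Finset.card_erase_of_mem hi, h]
      omega
    have h2 := ih s' t hcard
    push_cast at h2 ⊢
    linarith

lemma alpha_add_beta {n : ℕ} (s : Fin n → Bool) : alpha s + beta s = n := by
  rw [alpha, beta]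
  rw [show (Finset.univ.filter (fun i => s i = true))
      = (Finset.univ.filter (fun i => ¬ s i = false)) from by
    apply Finset.filter_congr; intro i _; simp]
  rw [Finset.card_filter_add_card_filter_not]
  simp

/-- For a loop-count function `f` and any state `s`,
`ōdeg w(s) ≤ ōdeg w(s_A)` and `u̲deg w(s) ≥ u̲deg w(s_B)`. -/
theorem odeg_weight_le_and_udeg_weight_ge {n : ℕ} (f : (Fin n → Bool) → ℕ)
    (hf : IsLoopCount f) (s : Fin n → Bool) :
    odeg (weight f s) ≤ odeg (weight f (fun _ => false)) ∧
    udeg (weight f s) ≥ udeg (weight f (fun _ => true)) := by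
  have habs : alpha s + beta s = n := alpha_add_beta s
  -- distances to the constant states
  have hA : (f s : ℤ) ≤ f (fun _ => false) + beta s := by
    have := lipschitz hf (beta s) s (fun _ => false) ?_
    · exact this
    · rw [beta]; congr 1; apply Finset.filter_congr; intro i _; simp
  have hB : (f s : ℤ) ≤ f (fun _ => true) + alpha s := by
    have := lipschitz hf (alpha s) s (fun _ => true) ?_
    · exact this
    · rw [alpha]; congr 1; apply Finset.filter_congr; intro i _; simp
  have h1s := hf.1 s
  have h1A := hf.1 (fun _ => false)
  have h1B := hf.1 (fun _ => true)
  have haA : alpha (fun _ : Fin n => false) = n := by simp [alpha]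
  have hbA : beta (fun _ : Fin n => false) = 0 := by simp [beta]
  have haB : alpha (fun _ : Fin n => true) = 0 := by simp [alpha]
  have hbB : beta (fun _ : Fin n => true) = n := by simp [beta]
  have hnonempty : ∀ t : Fin n → Bool, (weight f t).coeff.support.Nonempty := by
    intro t
    refine ⟨((alpha t : ℤ) - (beta t : ℤ)) - 2 * ((f t - 1 : ℕ) : ℤ), ?_⟩
    rw [mem_support_weight]
    exact ⟨0, by simpa using qAux_pow_coeff_bot (f t - 1), by push_cast; ring⟩
  constructor
  · -- odeg part
    have hub : odeg (weight f s)
        ≤ ((alpha s : ℤ) - (beta s : ℤ)) + 2 * ((f s - 1 : ℕ) : ℤ) := by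
      apply odeg_le (hnonempty s)
      intro x hx
      rw [mem_support_weight] at hx
      obtain ⟨a, ha, hax⟩ := hx
      have hale : a ≤ 4 * (f s - 1) := by
        have := Polynomial.le_natDegree_of_mem_supp a ha
        rwa [qAux_pow_natDegree] at this
      have : (a : ℤ) ≤ 4 * ((f s - 1 : ℕ) : ℤ) := by exact_mod_cast hale
      omega
    have hlb : ((alpha (fun _ : Fin n => false) : ℤ) - (beta (fun _ : Fin n => false) : ℤ))
          + 2 * ((f (fun _ => false) - 1 : ℕ) : ℤ) ≤ odeg (weight f (fun _ => false)) := by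
      apply le_odeg
      rw [mem_support_weight]
      refine ⟨4 * (f (fun _ => false) - 1), ?_, by push_cast; ring⟩
      simpa [Polynomial.mem_support_iff] using qAux_pow_coeff_top (f (fun _ => false) - 1)
    refine hub.trans (le_trans ?_ hlb)
    have c1 : ((f s - 1 : ℕ) : ℤ) = (f s : ℤ) - 1 := by omega
    have c2 : ((f (fun _ : Fin n => false) - 1 : ℕ) : ℤ) = (f (fun _ => false) : ℤ) - 1 := by
      omega
    rw [c1, c2, haA, hbA]
    have : (alpha s : ℤ) + beta s = n := by exact_mod_cast habs
    push_cast
    linarith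
  · -- udeg part
    have hlb : ((alpha s : ℤ) - (beta s : ℤ)) - 2 * ((f s - 1 : ℕ) : ℤ)
        ≤ udeg (weight f s) := by
      apply le_udeg (hnonempty s)
      intro x hx
      rw [mem_support_weight] at hx
      obtain ⟨a, ha, hax⟩ := hx
      have : (0 : ℤ) ≤ (a : ℤ) := by positivity
      omega
    have hub : udeg (weight f (fun _ => true))
        ≤ ((alpha (fun _ : Fin n => true) : ℤ) - (beta (fun _ : Fin n => true) : ℤ))
          - 2 * ((f (fun _ => true) - 1 : ℕ) : ℤ) := by
      apply udeg_le
      rw [mem_support_weight]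
      exact ⟨0, by simpa [Polynomial.mem_support_iff] using qAux_pow_coeff_bot (f (fun _ => true) - 1),
        by push_cast; ring⟩
    refine le_trans hub (le_trans ?_ hlb)
    have c1 : ((f s - 1 : ℕ) : ℤ) = (f s : ℤ) - 1 := by omega
    have c2 : ((f (fun _ : Fin n => true) - 1 : ℕ) : ℤ) = (f (fun _ => true) : ℤ) - 1 := by
      omega
    rw [c1, c2, haB, hbB]
    have : (alpha s : ℤ) + beta s = n := by exact_mod_cast habs
    push_cast
    linarith
end

section
/- Let f be a loop-count function on states of n crossings that is A-pseudo-adequate, i.e. f(Function.update s_A i true) ≤ f(s_A) for every index i. Then for every state s with β(s) ≥ 1, one has f(s) ≤ f(s_A) + β(s) − 1. -/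
open LaurentPolynomial

lemma beta_update_false {n : ℕ} (s : Fin n → Bool) (i : Fin n) (hi : s i = true) :
    beta (Function.update s i false) = beta s - 1 := by
  unfold beta
  have : (Finset.univ.filter (fun j => Function.update s i false j = true)) =
      (Finset.univ.filter (fun j => s j = true)).erase i := by
    ext j
    by_cases h : j = i <;> simp [Function.update, h, hi]
  rw [this, Finset.card_erase_of_mem (by simp [hi])]

/-- If `f` is A-pseudo-adequate, then for every state `s` with `β(s) ≥ 1`,
`f(s) ≤ f(s_A) + β(s) - 1`. -/
theorem loopCount_le_sA_add_beta_sub_one {n : ℕ} (f : (Fin n → Bool) → ℕ)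
    (hf : IsLoopCount f)
    (hA : ∀ i : Fin n, f (Function.update (fun _ => false) i true) ≤ f (fun _ => false))
    (s : Fin n → Bool) (hs : 1 ≤ beta s) :
    (f s : ℤ) ≤ (f (fun _ => false) : ℤ) + (beta s : ℤ) - 1 := by
  obtain ⟨b, hb⟩ : ∃ b, beta s = b := ⟨_, rfl⟩
  induction b generalizing s with
  | zero => omega
  | succ b ih =>
    have hex : ∃ i, s i = true := by
      by_contra h
      push_neg at h
      have : beta s = 0 := by
        unfold beta
        rw [Finset.card_eq_zero]
        ext j
        simp [h j]
      omega
    obtain ⟨i, hi⟩ := hex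
    set s' := Function.update s i false with hs'
    have hbs' : beta s' = b := by rw [hs', beta_update_false s i hi]; omega
    have hflip : |(f (Function.update s' i (!(s' i))) : ℤ) - (f s' : ℤ)| ≤ 1 := hf.2 s' i
    have hss' : Function.update s' i (!(s' i)) = s := by
      funext j
      by_cases h : j = i <;> simp [hs', Function.update, h, hi]
    rw [hss'] at hflip
    have hfle : (f s : ℤ) ≤ (f s' : ℤ) + 1 := by
      have := abs_le.mp hflip
      omega
    rcases Nat.eq_zero_or_pos b with hb0 | hbpos
    · -- beta s = 1; s' is the all-false state
      have hs'false : s' = (fun _ => false) := by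
        funext j
        by_contra h
        have hj : s' j = true := by
          cases hsj : s' j
          · exact absurd hsj h
          · rfl
        have : 1 ≤ beta s' := by
          unfold beta
          rw [Nat.one_le_iff_ne_zero, Ne, Finset.card_eq_zero]
          intro he
          have := Finset.eq_empty_iff_forall_notMem.mp he j
          simp [hj] at this
        omega
      have hsA : s = Function.update (fun _ => false) i true := by
        rw [← hss', hs'false]
        simp [hs'false, hi]
      have := hA i
      rw [← hsA] at this
      have : (f s : ℤ) ≤ (f (fun _ => false) : ℤ) := by exact_mod_cast this
      omega
    · have hih := ih s' (by omega) hbs'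
      omega
end
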